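/- Let R̂ be a nonzero Laurent polynomial over ℝ and let p, N, M be natural numbers. Suppose g and f are real polynomials such that T^N · R̂ equals the image of g in the ring of Laurent polynomials and T^M · ((1 − T^{−2})^p · R̂) equals the image of f. Then the multiplicity of 1 as a root of f equals p plus the multiplicity of 1 as a root of g. -/

import Mathlib

open LaurentPolynomial Polynomial

/-- If `R̂ ≠ 0` is a Laurent polynomial over ℝ, and `g, f` are real
polynomials with `T^N · R̂ = g` and `T^M · ((1 - T⁻²)^p · R̂) = f` in the ring of Laurent
polynomials, then the multiplicity of `1` as a root of `f` equals `p` plus the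
multiplicity of `1` as a root of `g`. -/
theorem order_of_vanishing_at_one (Rhat : LaurentPolynomial ℝ) (hR : Rhat ≠ 0)
    (p N M : ℕ) (g f : Polynomial ℝ)
    (hg : T (N : ℤ) * Rhat = g.toLaurent)
    (hf : T (M : ℤ) * ((1 - T (-2)) ^ p * Rhat) = f.toLaurent) :
    f.rootMultiplicity 1 = p + g.rootMultiplicity 1 := by
  have hg0 : g ≠ 0 := by
    intro h
    rw [h, map_zero] at hg
    exact (mul_ne_zero (isUnit_T (N:ℤ)).ne_zero hR) hg
  have keyL : T ((N:ℤ) + 2*p) * toLaurent f = T (M:ℤ) * ((T 2 - 1)^p * toLaurent g) := by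
    rw [← hf, ← hg]
    have e2 : (T 2 - 1 : LaurentPolynomial ℝ) = T 2 * (1 - T (-2)) := by
      rw [mul_sub, mul_one, ← T_add]; norm_num
    rw [e2, mul_pow, T_pow]
    ring_nf
    simp only [← T_add, mul_assoc, mul_comm, mul_left_comm]
    ring_nf
  have key : toLaurent (X ^ (N + 2*p) * f) = toLaurent (X ^ M * ((X^2 - 1)^p * g)) := by
    simp only [map_mul, map_pow, map_sub, map_one, Polynomial.toLaurent_X_pow,
      Polynomial.toLaurent_X, T_pow, mul_one]
    rw [show ((N + 2*p : ℕ) : ℤ) = (N:ℤ) + 2*p by push_cast; ring]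
    convert keyL using 4
    norm_num
  have keyP : X ^ (N + 2*p) * f = X ^ M * ((X^2 - 1)^p * g) := Polynomial.toLaurent_injective key
  have hsq : ((X:Polynomial ℝ)^2 - 1) = (X - 1) * (X + 1) := by ring
  have hsq0 : ((X:Polynomial ℝ)^2 - 1) ≠ 0 := by
    intro h
    have := congrArg (Polynomial.eval 0) h
    simp at this
  have hf0 : f ≠ 0 := by
    intro h
    rw [h, mul_zero] at keyP
    exact (mul_ne_zero (pow_ne_zero _ X_ne_zero)
      (mul_ne_zero (pow_ne_zero _ hsq0) hg0)) keyP.symm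
  have hXroot : ∀ n : ℕ, rootMultiplicity (1:ℝ) (X ^ n : Polynomial ℝ) = 0 := by
    intro n
    apply rootMultiplicity_eq_zero
    simp [Polynomial.IsRoot]
  have hrm : rootMultiplicity (1:ℝ) (((X:Polynomial ℝ)^2-1)^p) = p := by
    rw [hsq, mul_pow, rootMultiplicity_mul
      (mul_ne_zero (pow_ne_zero _ (by intro h; have := congrArg (Polynomial.eval 0) h; simp at this : (X - 1 : Polynomial ℝ) ≠ 0))
        (pow_ne_zero _ (by intro h; have := congrArg (Polynomial.eval 0) h; simp at this)))]
    have h1 : rootMultiplicity (1:ℝ) ((X - 1 : Polynomial ℝ)^p) = p := by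
      have := rootMultiplicity_X_sub_C_pow (R := ℝ) 1 p
      simpa using this
    have h2 : rootMultiplicity (1:ℝ) ((X + 1 : Polynomial ℝ)^p) = 0 := by
      apply rootMultiplicity_eq_zero
      simp [Polynomial.IsRoot]
    omega
  have L := congrArg (rootMultiplicity (1:ℝ)) keyP
  rw [rootMultiplicity_mul (mul_ne_zero (pow_ne_zero _ X_ne_zero) hf0),
    rootMultiplicity_mul (mul_ne_zero (pow_ne_zero _ X_ne_zero)
      (mul_ne_zero (pow_ne_zero _ hsq0) hg0)),
    rootMultiplicity_mul (mul_ne_zero (pow_ne_zero _ hsq0) hg0),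
    hXroot, hXroot, hrm] at L
  omega
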